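/- Let (Ω, μ) be a σ-finite measure space, T > 0, and let w : [0,T] × Ω → ℝ be measurable such that: for μ-almost every x ∈ Ω the function t ↦ w(t, x) is absolutely continuous on [0,T] with pointwise a.e. derivative ∂_t w; ∂_t w is integrable on (0,T) × Ω; and w(0, ·) ∈ L¹(Ω, μ). Then for every t̄ ∈ [0,T], w(t̄, ·) ∈ L¹(Ω, μ) and ∫_Ω |w(t̄, x)| dμ = ∫_Ω |w(0, x)| dμ + ∫₀^{t̄} ∫_Ω sgn(w(t, x)) ∂_t w(t, x) dμ dt, where sgn(r) = r/|r| for r ≠ 0 and sgn(0) = 0. -/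

import Mathlib

open MeasureTheory Set Filter Topology

lemma measurable_realSign : Measurable Real.sign := by
  have : Real.sign = fun r : ℝ => if r < 0 then (-1 : ℝ) else if 0 < r then 1 else 0 := by
    funext r; rfl
  rw [this]
  exact Measurable.ite measurableSet_Iio measurable_const
    (Measurable.ite measurableSet_Ioi measurable_const measurable_const)

lemma abs_realSign_le (r : ℝ) : |Real.sign r| ≤ 1 := by
  rcases Real.sign_apply_eq r with h | h | h <;> simp [h]

lemma ae_hasDerivAt_primitive_nonneg {ρ : ℝ → ℝ} (hm : Measurable ρ)
    (hi : Integrable ρ volume) (hnn : ∀ t, 0 ≤ ρ t) :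
    ∀ᵐ t, HasDerivAt (fun u => ∫ s in (0:ℝ)..u, ρ s) (ρ t) t := by
  have hii : ∀ a b : ℝ, IntervalIntegrable ρ volume a b := fun a b => hi.intervalIntegrable
  have hcont : Continuous fun u => ∫ s in (0:ℝ)..u, ρ s :=
    intervalIntegral.continuous_primitive hii 0
  have hsub : ∀ a b : ℝ, (∫ s in (0:ℝ)..b, ρ s) - ∫ s in (0:ℝ)..a, ρ s = ∫ s in a..b, ρ s :=
    fun a b => intervalIntegral.integral_interval_sub_left (hii 0 b) (hii 0 a)
  have hmono : Monotone fun u => ∫ s in (0:ℝ)..u, ρ s := by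
    intro a b hab
    have h2 := intervalIntegral.integral_nonneg (μ := volume) hab (fun u _ => hnn u)
    nlinarith [hsub a b]
  set S : StieltjesFunction ℝ := ⟨_, hmono, fun x => hcont.continuousWithinAt⟩ with hSdef
  have hmeq : S.measure = volume.withDensity (fun t => ENNReal.ofReal (ρ t)) := by
    refine Measure.ext_of_Ioc _ _ (fun a b hab => ?_)
    rw [S.measure_Ioc, withDensity_apply _ measurableSet_Ioc,
      ← ofReal_integral_eq_lintegral_ofReal (hi.restrict) (Eventually.of_forall hnn)]
    congr 1
    have : S b - S a = ∫ s in a..b, ρ s := hsub a b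
    rw [this, intervalIntegral.integral_of_le hab.le]
  have h2 : ∀ᵐ t, (Measure.rnDeriv S.measure volume t).toReal = ρ t := by
    rw [hmeq]
    filter_upwards [Measure.rnDeriv_withDensity volume hm.ennreal_ofReal] with t ht
    rw [ht, ENNReal.toReal_ofReal (hnn t)]
  filter_upwards [S.ae_hasDerivAt, h2] with t h1 h2
  rw [h2] at h1
  exact h1

lemma sign_cast_eq (r : ℝ) : (SignType.sign r : ℝ) = Real.sign r := by
  rcases lt_trichotomy r 0 with h | h | h
  · rw [Real.sign_of_neg h]; simp [sign_neg h]
  · simp [h, Real.sign_zero]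
  · rw [Real.sign_of_pos h]; simp [sign_pos h]

lemma abs_primitive {f : ℝ → ℝ} (hm : Measurable f) (hi : Integrable f volume)
    (c : ℝ) {tb : ℝ} (htb : 0 ≤ tb) :
    |c + ∫ s in (0:ℝ)..tb, f s| =
      |c| + ∫ s in Set.Ioc (0:ℝ) tb, Real.sign (c + ∫ u in (0:ℝ)..s, f u) * f s := by
  set g : ℝ → ℝ := fun t => c + ∫ s in (0:ℝ)..t, f s with hgdef
  set V : ℝ → ℝ := fun t => ∫ s in (0:ℝ)..t, |f s| with hVdef
  have hii : ∀ a b : ℝ, IntervalIntegrable f volume a b := fun a b => hi.intervalIntegrable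
  have hiabs : Integrable (fun s => |f s|) volume := hi.abs
  have hiiabs : ∀ a b : ℝ, IntervalIntegrable (fun s => |f s|) volume a b :=
    fun a b => hiabs.intervalIntegrable
  have hVd : ∀ᵐ t, HasDerivAt V (|f t|) t :=
    ae_hasDerivAt_primitive_nonneg hm.abs hiabs (fun t => abs_nonneg _)
  -- derivative of g
  have hQnn : ∀ s : ℝ, (0:ℝ) ≤ max (-f s) 0 := fun s => le_max_right _ _
  have hQint : Integrable (fun s => max (-f s) 0) volume := hi.neg.pos_part
  have hQd : ∀ᵐ t, HasDerivAt (fun u => ∫ s in (0:ℝ)..u, max (-f s) 0) (max (-f t) 0) t :=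
    ae_hasDerivAt_primitive_nonneg (hm.neg.max measurable_const) hQint hQnn
  have key : ∀ s, f s = |f s| - 2 * max (-f s) 0 := by
    intro s
    rcases le_or_gt 0 (f s) with h | h
    · rw [abs_of_nonneg h, max_eq_right (by linarith)]; ring
    · rw [abs_of_neg h, max_eq_left (by linarith)]; ring
  have hgsplit : ∀ u : ℝ, g u = c + (V u - 2 * ∫ s in (0:ℝ)..u, max (-f s) 0) := by
    intro u
    have h1 : ∫ s in (0:ℝ)..u, f s
        = ∫ s in (0:ℝ)..u, (|f s| - 2 * max (-f s) 0) := by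
      apply intervalIntegral.integral_congr
      intro s _
      exact key s
    have h2 : ∫ s in (0:ℝ)..u, (|f s| - 2 * max (-f s) 0)
        = (∫ s in (0:ℝ)..u, |f s|) - ∫ s in (0:ℝ)..u, 2 * max (-f s) 0 :=
      intervalIntegral.integral_sub (hiiabs 0 u) ((hQint.const_mul 2).intervalIntegrable)
    have h3 : ∫ s in (0:ℝ)..u, 2 * max (-f s) 0 = 2 * ∫ s in (0:ℝ)..u, max (-f s) 0 :=
      intervalIntegral.integral_const_mul 2 _
    simp only [hgdef, hVdef]
    rw [h1, h2, h3]
  have hgd : ∀ᵐ t, HasDerivAt g (f t) t := by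
    filter_upwards [hVd, hQd] with t h1 h2
    have h3 := (h1.sub (h2.const_mul 2)).const_add c
    have h4 : HasDerivAt g (|f t| - 2 * max (-f t) 0) t :=
      h3.congr_of_eventuallyEq (Eventually.of_forall fun u => hgsplit u)
    rw [← key t] at h4
    exact h4
  -- Lipschitz-type bound
  have hgsub : ∀ a b : ℝ, g b - g a = ∫ s in a..b, f s := by
    intro a b
    simp only [hgdef]
    have := intervalIntegral.integral_interval_sub_left (hii 0 b) (hii 0 a)
    linarith
  have hVsub : ∀ a b : ℝ, V b - V a = ∫ s in a..b, |f s| := by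
    intro a b
    exact intervalIntegral.integral_interval_sub_left (hiiabs 0 b) (hiiabs 0 a)
  have hlip : ∀ a b : ℝ, a ≤ b → |g b - g a| ≤ V b - V a := by
    intro a b hab
    rw [hgsub, hVsub]
    exact intervalIntegral.abs_integral_le_integral_abs hab
  have hMmono : Monotone (fun t => |g t| + V t) := by
    intro a b hab
    have h1 := hlip a b hab
    have h2 := abs_sub_abs_le_abs_sub (g a) (g b)
    rw [abs_sub_comm] at h2
    simp only
    linarith
  have hNmono : Monotone (fun t => V t - |g t|) := by
    intro a b hab
    have h1 := hlip a b hab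
    have h2 := abs_sub_abs_le_abs_sub (g b) (g a)
    simp only
    linarith
  have hgc : Continuous g := continuous_const.add (intervalIntegral.continuous_primitive hii 0)
  have hVc : Continuous V := intervalIntegral.continuous_primitive hiiabs 0
  have hMc : Continuous (fun t => |g t| + V t) := hgc.abs.add hVc
  have hNc : Continuous (fun t => V t - |g t|) := hVc.sub hgc.abs
  set SM : StieltjesFunction ℝ := ⟨fun t => |g t| + V t, hMmono, fun x => hMc.continuousWithinAt⟩
    with hSMdef
  set SN : StieltjesFunction ℝ := ⟨fun t => V t - |g t|, hNmono, fun x => hNc.continuousWithinAt⟩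
    with hSNdef
  have hext : SM.measure + SN.measure
      = volume.withDensity (fun t => ENNReal.ofReal (2 * |f t|)) := by
    refine Measure.ext_of_Ioc' _ _ (fun a b hab => ?_) (fun a b hab => ?_)
    · rw [Measure.add_apply, SM.measure_Ioc, SN.measure_Ioc]
      exact (ENNReal.add_lt_top.2 ⟨ENNReal.ofReal_lt_top, ENNReal.ofReal_lt_top⟩).ne
    · rw [Measure.add_apply, SM.measure_Ioc, SN.measure_Ioc,
        withDensity_apply _ measurableSet_Ioc,
        ← ofReal_integral_eq_lintegral_ofReal ((hiabs.const_mul 2).restrict)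
          (Eventually.of_forall fun s => by positivity)]
      have hVint : ∫ s in Set.Ioc a b, 2 * |f s| = 2 * (V b - V a) := by
        rw [hVsub a b, ← intervalIntegral.integral_const_mul,
          intervalIntegral.integral_of_le hab.le]
      rw [hVint, ← ENNReal.ofReal_add (sub_nonneg.2 (hMmono hab.le))
        (sub_nonneg.2 (hNmono hab.le))]
      congr 1
      show |g b| + V b - (|g a| + V a) + (V b - |g b| - (V a - |g a|)) = 2 * (V b - V a)
      ring
  have hacsum : SM.measure + SN.measure ≪ volume := by
    rw [hext]; exact withDensity_absolutelyContinuous _ _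
  have hac : SM.measure ≪ volume :=
    (Measure.absolutelyContinuous_of_le (Measure.le_add_right le_rfl)).trans hacsum
  have hrd : SM.measure = volume.withDensity (SM.measure.rnDeriv volume) :=
    (Measure.withDensity_rnDeriv_eq _ _ hac).symm
  have hDen : ∀ᵐ t, (SM.measure.rnDeriv volume t).toReal
      = Real.sign (g t) * f t + |f t| := by
    filter_upwards [SM.ae_hasDerivAt, hVd, hgd] with t hMd hVt hgt
    set d : ℝ := (SM.measure.rnDeriv volume t).toReal with hd
    have hA : HasDerivAt (fun u => |g u|) (d - |f t|) t := by
      have h1 : HasDerivAt (fun u => (|g u| + V u) - V u) (d - |f t|) t := hMd.sub hVt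
      exact h1.congr_of_eventuallyEq (Eventually.of_forall fun u => by ring)
    rcases eq_or_ne (g t) 0 with hg0 | hg0
    · -- kink argument: differentiability of |g| at a zero of g forces f t = 0
      have hsr : Tendsto (slope (fun u => |g u|) t) (𝓝[>] t) (𝓝 (d - |f t|)) :=
        (hasDerivAt_iff_tendsto_slope.1 hA).mono_left
          (nhdsWithin_mono _ (fun s hs => ne_of_gt hs))
      have hsl : Tendsto (slope (fun u => |g u|) t) (𝓝[<] t) (𝓝 (d - |f t|)) :=
        (hasDerivAt_iff_tendsto_slope.1 hA).mono_left
          (nhdsWithin_mono _ (fun s hs => ne_of_lt hs))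
      have hgr : Tendsto (fun s => |slope g t s|) (𝓝[>] t) (𝓝 |f t|) :=
        ((hasDerivAt_iff_tendsto_slope.1 hgt).mono_left
          (nhdsWithin_mono _ (fun s hs => ne_of_gt hs))).abs
      have hgl : Tendsto (fun s => |slope g t s|) (𝓝[<] t) (𝓝 |f t|) :=
        ((hasDerivAt_iff_tendsto_slope.1 hgt).mono_left
          (nhdsWithin_mono _ (fun s hs => ne_of_lt hs))).abs
      have heqr : Set.EqOn (slope (fun u => |g u|) t) (fun s => |slope g t s|) (Ioi t) := by
        intro s hs
        have hst : (0:ℝ) < s - t := sub_pos.2 hs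
        simp only [slope_def_field, hg0, abs_zero, sub_zero]
        rw [abs_div, abs_of_pos hst]
      have heql : Set.EqOn (slope (fun u => |g u|) t) (fun s => -|slope g t s|) (Iio t) := by
        intro s hs
        have hst : s - t < 0 := sub_neg.2 hs
        simp only [slope_def_field, hg0, abs_zero, sub_zero]
        rw [abs_div, abs_of_neg hst]
        rw [div_neg, neg_neg]
      have hder_r : d - |f t| = |f t| :=
        tendsto_nhds_unique
          (hsr.congr' (eventuallyEq_of_mem self_mem_nhdsWithin heqr)) hgr
      have hder_l : d - |f t| = -|f t| :=
        tendsto_nhds_unique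
          (hsl.congr' (eventuallyEq_of_mem self_mem_nhdsWithin heql)) (hgl.neg)
      have h0 : |f t| = 0 := by linarith
      have hft : f t = 0 := abs_eq_zero.1 h0
      have hd0 : d = 0 := by linarith
      simp [hg0, Real.sign_zero, hft, hd0]
    · have hcomp : HasDerivAt (fun u => |g u|) ((SignType.sign (g t) : ℝ) * f t) t :=
        (hasDerivAt_abs hg0).comp t hgt
      have huniq : d - |f t| = (SignType.sign (g t) : ℝ) * f t := hA.unique hcomp
      rw [sign_cast_eq] at huniq
      linarith
  -- final computation
  have h5 : (|g tb| + V tb) - (|g 0| + V 0) = (SM.measure (Set.Ioc 0 tb)).toReal := by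
    rw [SM.measure_Ioc, ENNReal.toReal_ofReal (sub_nonneg.2 (hMmono htb))]
  have h2 : SM.measure (Set.Ioc 0 tb) = ∫⁻ s in Set.Ioc 0 tb, SM.measure.rnDeriv volume s := by
    conv_lhs => rw [hrd]
    rw [withDensity_apply _ measurableSet_Ioc]
  have h3 : (SM.measure (Set.Ioc 0 tb)).toReal
      = ∫ s in Set.Ioc 0 tb, (SM.measure.rnDeriv volume s).toReal := by
    rw [h2]
    exact (integral_toReal ((Measure.measurable_rnDeriv _ _).aemeasurable.restrict)
      (ae_restrict_of_ae (Measure.rnDeriv_lt_top _ _))).symm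
  have h4 : ∫ s in Set.Ioc 0 tb, (SM.measure.rnDeriv volume s).toReal
      = ∫ s in Set.Ioc 0 tb, (Real.sign (g s) * f s + |f s|) :=
    integral_congr_ae (ae_restrict_of_ae hDen)
  have hsgint : Integrable (fun s => Real.sign (g s) * f s)
      (volume.restrict (Set.Ioc 0 tb)) := by
    refine Integrable.mono' hiabs.restrict
      (((measurable_realSign.comp hgc.measurable).mul hm).aestronglyMeasurable)
      (Eventually.of_forall fun s => ?_)
    rw [Real.norm_eq_abs, abs_mul]
    calc |Real.sign (g s)| * |f s| ≤ 1 * |f s| :=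
          mul_le_mul_of_nonneg_right (abs_realSign_le _) (abs_nonneg _)
      _ = |f s| := one_mul _
  have h6 : ∫ s in Set.Ioc 0 tb, (Real.sign (g s) * f s + |f s|)
      = (∫ s in Set.Ioc 0 tb, Real.sign (g s) * f s) + ∫ s in Set.Ioc 0 tb, |f s| :=
    integral_add hsgint hiabs.restrict
  have h7 : ∫ s in Set.Ioc 0 tb, |f s| = V tb - V 0 := by
    rw [hVsub 0 tb, intervalIntegral.integral_of_le htb]
  have hg0c : g 0 = c := by simp [hgdef]
  have hV0 : V 0 = 0 := by simp [hVdef]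
  have hfinal : |g tb| + V tb - (|g 0| + V 0)
      = (∫ s in Set.Ioc 0 tb, Real.sign (g s) * f s) + (V tb - V 0) := by
    rw [h5, h3, h4, h6, h7]
  rw [hg0c, hV0] at hfinal
  show |g tb| = |c| + ∫ s in Set.Ioc 0 tb, Real.sign (g s) * f s
  linarith

/-- If `w : [0,T] × Ω → ℝ` is measurable, `t ↦ w(t,x)` is absolutely continuous
on `[0,T]` for a.e. `x` with a.e. derivative `∂ₜw` (expressed through the
fundamental theorem of calculus: `w(t,x) = w(0,x) + ∫₀ᵗ ∂ₜw(s,x) ds`), `∂ₜw` is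
integrable on `(0,T) × Ω` and `w(0,·) ∈ L¹(Ω)`, then for every `t̄ ∈ [0,T]` the
function `w(t̄,·)` is in `L¹(Ω)` and
`∫_Ω |w(t̄,x)| dμ = ∫_Ω |w(0,x)| dμ + ∫₀^{t̄} ∫_Ω sgn(w(t,x)) ∂ₜw(t,x) dμ dt`. -/
theorem stmt_13 {Ω : Type*} [MeasurableSpace Ω] (μ : Measure Ω) [SigmaFinite μ]
    (T : ℝ) (hT : 0 < T) (w dtw : ℝ → Ω → ℝ)
    (hw_meas : Measurable fun p : ℝ × Ω => w p.1 p.2)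
    (hdtw_meas : Measurable fun p : ℝ × Ω => dtw p.1 p.2)
    (hAC : ∀ᵐ x ∂μ, (IntegrableOn (fun t => dtw t x) (Set.Ioc 0 T) volume) ∧
      ∀ t ∈ Set.Icc (0 : ℝ) T, w t x = w 0 x + ∫ s in Set.Ioc (0 : ℝ) t, dtw s x)
    (hdtw_int : Integrable (fun p : ℝ × Ω => dtw p.1 p.2)
      ((volume.restrict (Set.Ioc 0 T)).prod μ))
    (hw0 : Integrable (w 0) μ) :
    ∀ tbar ∈ Set.Icc (0 : ℝ) T, Integrable (w tbar) μ ∧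
      ∫ x, |w tbar x| ∂μ =
        (∫ x, |w 0 x| ∂μ) +
          ∫ t in Set.Ioc (0 : ℝ) tbar, ∫ x, Real.sign (w t x) * dtw t x ∂μ := by
  intro tbar htbar
  obtain ⟨htb0, htbT⟩ := htbar
  have hsec : ∀ x, Measurable (fun t => dtw t x) :=
    fun x => hdtw_meas.comp (measurable_id.prodMk measurable_const)
  have hwsec : ∀ t, Measurable (fun x => w t x) :=
    fun t => hw_meas.comp (measurable_const.prodMk measurable_id)
  -- pointwise (in x) identity and bound
  have hptwise : ∀ᵐ x ∂μ,
      (|w tbar x| = |w 0 x| + ∫ t in Set.Ioc (0:ℝ) tbar, Real.sign (w t x) * dtw t x) ∧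
      |w tbar x| ≤ |w 0 x| + ∫ t in Set.Ioc (0:ℝ) T, |dtw t x| := by
    filter_upwards [hAC] with x hx
    obtain ⟨hint, hfun⟩ := hx
    set f : ℝ → ℝ := (Set.Ioc (0:ℝ) T).indicator (fun t => dtw t x) with hfdef
    have hfm : Measurable f := (hsec x).indicator measurableSet_Ioc
    have hfi : Integrable f volume := hint.integrable_indicator measurableSet_Ioc
    have hkey : ∀ t ∈ Set.Icc (0:ℝ) T,
        (∫ s in (0:ℝ)..t, f s) = ∫ s in Set.Ioc (0:ℝ) t, dtw s x := by
      intro t ht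
      rw [intervalIntegral.integral_of_le ht.1, hfdef, setIntegral_indicator measurableSet_Ioc,
        Set.inter_eq_left.2 (Set.Ioc_subset_Ioc_right ht.2)]
    have hg_eq : ∀ t ∈ Set.Icc (0:ℝ) T, w 0 x + ∫ s in (0:ℝ)..t, f s = w t x := by
      intro t ht
      rw [hkey t ht, ← hfun t ht]
    have hmain := abs_primitive hfm hfi (w 0 x) htb0
    rw [hg_eq tbar ⟨htb0, htbT⟩] at hmain
    constructor
    · rw [hmain]
      congr 1
      refine setIntegral_congr_fun measurableSet_Ioc (fun s hs => ?_)
      have hsT : s ∈ Set.Ioc (0:ℝ) T := ⟨hs.1, hs.2.trans htbT⟩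
      have hsIcc : s ∈ Set.Icc (0:ℝ) T := ⟨hsT.1.le, hsT.2⟩
      rw [hg_eq s hsIcc, hfdef]
      rw [Set.indicator_of_mem hsT]
    · have habs : |w tbar x - w 0 x| ≤ ∫ t in Set.Ioc (0:ℝ) T, |dtw t x| := by
        rw [hfun tbar ⟨htb0, htbT⟩]
        have h1 : |∫ s in Set.Ioc (0:ℝ) tbar, dtw s x| ≤ ∫ s in Set.Ioc (0:ℝ) tbar, |dtw s x| := by
          simpa [Real.norm_eq_abs] using
            norm_integral_le_integral_norm (μ := volume.restrict (Set.Ioc (0:ℝ) tbar))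
              (f := fun s => dtw s x)
        have h2 : ∫ s in Set.Ioc (0:ℝ) tbar, |dtw s x| ≤ ∫ s in Set.Ioc (0:ℝ) T, |dtw s x| := by
          refine setIntegral_mono_set hint.abs
            (Eventually.of_forall fun s => abs_nonneg _) ?_
          exact HasSubset.Subset.eventuallyLE (Set.Ioc_subset_Ioc_right htbT)
        calc |w 0 x + (∫ s in Set.Ioc (0:ℝ) tbar, dtw s x) - w 0 x|
            = |∫ s in Set.Ioc (0:ℝ) tbar, dtw s x| := by ring_nf
          _ ≤ ∫ s in Set.Ioc (0:ℝ) T, |dtw s x| := h1.trans h2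
      have := abs_sub_abs_le_abs_sub (w tbar x) (w 0 x)
      linarith
  -- integrable dominating function
  have hDom : Integrable (fun x => ∫ t in Set.Ioc (0:ℝ) T, |dtw t x|) μ := by
    have h := hdtw_int.norm.integral_prod_right
    simpa [Real.norm_eq_abs] using h
  have hwint : Integrable (w tbar) μ := by
    refine Integrable.mono' (hw0.abs.add hDom) (hwsec tbar).aestronglyMeasurable ?_
    filter_upwards [hptwise] with x hx
    rw [Real.norm_eq_abs]
    exact hx.2
  refine ⟨hwint, ?_⟩
  -- integrability of the sign-times-derivative function on the product
  have hGint : Integrable (fun p : ℝ × Ω => Real.sign (w p.1 p.2) * dtw p.1 p.2)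
      ((volume.restrict (Set.Ioc 0 tbar)).prod μ) := by
    have hrestr : Integrable (fun p : ℝ × Ω => dtw p.1 p.2)
        ((volume.restrict (Set.Ioc 0 tbar)).prod μ) := by
      have he : volume.restrict (Set.Ioc (0:ℝ) tbar)
          = (volume.restrict (Set.Ioc 0 T)).restrict (Set.Ioc 0 tbar) := by
        rw [Measure.restrict_restrict measurableSet_Ioc,
          Set.inter_eq_left.2 (Set.Ioc_subset_Ioc_right htbT)]
      rw [he, ← Measure.restrict_univ (μ := μ), Measure.prod_restrict]
      exact hdtw_int.restrict
    refine hrestr.norm.mono'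
      (((measurable_realSign.comp hw_meas).mul hdtw_meas).aestronglyMeasurable)
      (Eventually.of_forall fun p => ?_)
    rw [Real.norm_eq_abs, Real.norm_eq_abs, abs_mul]
    calc |Real.sign (w p.1 p.2)| * |dtw p.1 p.2| ≤ 1 * |dtw p.1 p.2| :=
          mul_le_mul_of_nonneg_right (abs_realSign_le _) (abs_nonneg _)
      _ = |dtw p.1 p.2| := one_mul _
  have hswap : ∫ x, (∫ t in Set.Ioc (0:ℝ) tbar, Real.sign (w t x) * dtw t x) ∂μ
      = ∫ t in Set.Ioc (0:ℝ) tbar, ∫ x, Real.sign (w t x) * dtw t x ∂μ :=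
    (integral_integral_swap (f := fun t x => Real.sign (w t x) * dtw t x) hGint).symm
  have hFint : Integrable (fun x => ∫ t in Set.Ioc (0:ℝ) tbar, Real.sign (w t x) * dtw t x) μ :=
    hGint.integral_prod_right
  calc ∫ x, |w tbar x| ∂μ
      = ∫ x, (|w 0 x| + ∫ t in Set.Ioc (0:ℝ) tbar, Real.sign (w t x) * dtw t x) ∂μ := by
        refine integral_congr_ae ?_
        filter_upwards [hptwise] with x hx
        exact hx.1
    _ = (∫ x, |w 0 x| ∂μ)
        + ∫ x, (∫ t in Set.Ioc (0:ℝ) tbar, Real.sign (w t x) * dtw t x) ∂μ :=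
        integral_add hw0.abs hFint
    _ = (∫ x, |w 0 x| ∂μ)
        + ∫ t in Set.Ioc (0:ℝ) tbar, ∫ x, Real.sign (w t x) * dtw t x ∂μ := by rw [hswap]
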